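/- arXiv:1701.02119 — 2 statements merged into one kernel-verified Lean document; each statement's English description precedes it below -/
import Mathlib

section
/- Let W: X → Y be a DMC with fixed input distribution P_X (all π(x) > 0, all π(y) > 0), let y_a, y_b ∈ Y be distinct, and let Q be their merger with ΔI := I(W,P_X) − I(Q,P_X). Then ΔI ≤ (π_a + π_b) · |X| · d(α, β), where α = (α_x)_{x∈X} and β = (β_x)_{x∈X} are the posterior vectors of y_a and y_b. -/
open scoped BigOperators

/-- `η(p) = -p ln p` (equals `0` at `p = 0` since `Real.log 0 = 0`). -/
noncomputable def eta (p : ℝ) : ℝ := -p * Real.log p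

/-- Output distribution `π(y) = ∑ x, π(x) W(y|x)`. -/
noncomputable def outDist {X Y : Type} [Fintype X] (pX : X → ℝ) (W : X → Y → ℝ) (y : Y) : ℝ :=
  ∑ x, pX x * W x y

/-- Posterior probability `W(x|y) = π(x) W(y|x) / π(y)`. -/
noncomputable def post {X Y : Type} [Fintype X] (pX : X → ℝ) (W : X → Y → ℝ) (x : X) (y : Y) : ℝ :=
  pX x * W x y / outDist pX W y

/-- Mutual information `I(W, P_X) = ∑ x, η(π(x)) - ∑ x y, π(y) η(W(x|y))`. -/
noncomputable def mutInfo {X Y : Type} [Fintype X] [Fintype Y]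
    (pX : X → ℝ) (W : X → Y → ℝ) : ℝ :=
  (∑ x, eta (pX x)) - ∑ x, ∑ y, outDist pX W y * eta (post pX W x y)

/-- The merger of output letters `ya` and `yb`: the new output alphabet is
`Option {y // y ≠ ya ∧ y ≠ yb}`, with `none` playing the role of the merged letter `y_ab`. -/
noncomputable def merger {X Y : Type} [DecidableEq Y] (W : X → Y → ℝ) (ya yb : Y) (x : X) :
    Option {y : Y // y ≠ ya ∧ y ≠ yb} → ℝ
  | none => W x ya + W x yb
  | some y => W x y.1

/-- The scalar "distance" `d(α,ζ) = min (d₁(α,ζ), d₂(α,ζ))` where `d₁(α,ζ) = |ζ - α|` and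
`d₂(α,ζ) = (ζ-α)²/min(α,ζ)` if `α,ζ > 0` and `∞` otherwise (so the `min` collapses to `d₁`
in that case). -/
noncomputable def dSc (a z : ℝ) : ℝ :=
  if 0 < a ∧ 0 < z then min |z - a| ((z - a) ^ 2 / min a z) else |z - a|

/-- The vector "distance" `d(α,β) = max_{x ∈ X} d(α_x, β_x)`. -/
noncomputable def dVec {X : Type} [Fintype X] [Nonempty X] (a b : X → ℝ) : ℝ :=
  Finset.univ.sup' Finset.univ_nonempty fun x => dSc (a x) (b x)

lemma log_ineq (α γ : ℝ) (hα : 0 ≤ α) (hγ : 0 < γ) :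
    α * (Real.log α - Real.log γ) ≤ α * (α - γ) / γ := by
  rcases eq_or_lt_of_le hα with h | h
  · simp [← h]
  · have h1 : Real.log (α / γ) ≤ α / γ - 1 := Real.log_le_sub_one_of_pos (by positivity)
    rw [Real.log_div h.ne' hγ.ne'] at h1
    have h2 := mul_le_mul_of_nonneg_left h1 hα
    have h3 : α * (α / γ - 1) = α * (α - γ) / γ := by field_simp
    linarith [h3 ▸ h2]

set_option maxHeartbeats 1000000 in
lemma key (pa pb α β : ℝ) (ha : 0 < pa) (hb : 0 < pb) (hα : 0 ≤ α) (hβ : 0 ≤ β) :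
    (pa + pb) * eta ((pa * α + pb * β) / (pa + pb)) - pa * eta α - pb * eta β
      ≤ (pa + pb) * dSc α β := by
  have hs : 0 < pa + pb := by linarith
  set γ : ℝ := (pa * α + pb * β) / (pa + pb) with hγdef
  by_cases h0 : pa * α + pb * β = 0
  · have hα0 : α = 0 := by nlinarith
    have hβ0 : β = 0 := by nlinarith
    have : γ = 0 := by rw [hγdef, h0]; simp
    simp [this, hα0, hβ0, eta, dSc]
  · have hγpos : 0 < γ := by
      have : 0 < pa * α + pb * β :=
        lt_of_le_of_ne (by positivity) (Ne.symm h0)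
      positivity
    have hsγ : (pa + pb) * γ = pa * α + pb * β := by
      rw [hγdef]; field_simp
    have hLHS : (pa + pb) * eta γ - pa * eta α - pb * eta β
        = pa * (α * (Real.log α - Real.log γ)) + pb * (β * (Real.log β - Real.log γ)) := by
      simp only [eta]
      have : (pa + pb) * (-γ * Real.log γ) = -(pa * α + pb * β) * Real.log γ := by
        rw [← hsγ]; ring
      rw [this]; ring
    have hb1 := log_ineq α γ hα hγpos
    have hb2 := log_ineq β γ hβ hγpos
    have hB : pa * (α * (α - γ) / γ) + pb * (β * (β - γ) / γ)
        = pa * pb * (α - β) ^ 2 / ((pa + pb) * γ) := by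
      rw [hγdef]; field_simp; ring
    have hmain : (pa + pb) * eta γ - pa * eta α - pb * eta β
        ≤ pa * pb * (α - β) ^ 2 / ((pa + pb) * γ) := by
      rw [hLHS, ← hB]
      have := mul_le_mul_of_nonneg_left hb1 ha.le
      have := mul_le_mul_of_nonneg_left hb2 hb.le
      linarith
    have hd1 : pa * pb * (α - β) ^ 2 / ((pa + pb) * γ) ≤ (pa + pb) * |β - α| := by
      rw [div_le_iff₀ (by positivity)]
      have hsγ' : (pa + pb) * ((pa + pb) * γ) = (pa + pb) * (pa * α + pb * β) := by
        rw [hsγ]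
      rcases abs_cases (β - α) with ⟨he, _⟩ | ⟨he, _⟩ <;>
        nlinarith [mul_pos ha hb, sq_nonneg (α - β), mul_nonneg ha.le hα,
          mul_nonneg hb.le hβ, mul_nonneg (mul_nonneg ha.le ha.le) hα,
          mul_nonneg (mul_nonneg hb.le hb.le) hβ,
          mul_nonneg (mul_nonneg ha.le hb.le) hα,
          mul_nonneg (mul_nonneg ha.le hb.le) hβ]
    rcases lt_or_ge 0 α with hαp | hαn
    · rcases lt_or_ge 0 β with hβp | hβn
      · have hm : 0 < min α β := lt_min hαp hβp
        have hd2 : pa * pb * (α - β) ^ 2 / ((pa + pb) * γ) ≤ (pa + pb) * ((β - α) ^ 2 / min α β) := by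
          rw [div_le_iff₀ (by positivity)]
          have h1 : (pa + pb) * ((β - α) ^ 2 / min α β) = (pa + pb) * (β - α) ^ 2 / min α β := by
            ring
          rw [h1, div_mul_eq_mul_div, le_div_iff₀ hm]
          have hγm : (pa + pb) * min α β ≤ (pa + pb) * γ := by
            rw [hsγ]
            have h2 : min α β ≤ α := min_le_left _ _
            have h3 : min α β ≤ β := min_le_right _ _
            nlinarith
          have e1 : pa * pb ≤ (pa + pb) ^ 2 := by nlinarith
          calc pa * pb * (α - β) ^ 2 * min α β
              ≤ (pa + pb) ^ 2 * (α - β) ^ 2 * min α β := by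
                apply mul_le_mul_of_nonneg_right _ hm.le
                exact mul_le_mul_of_nonneg_right e1 (sq_nonneg _)
            _ = (pa + pb) * (α - β) ^ 2 * ((pa + pb) * min α β) := by ring
            _ ≤ (pa + pb) * (α - β) ^ 2 * ((pa + pb) * γ) := by
                apply mul_le_mul_of_nonneg_left hγm (by positivity)
            _ = (pa + pb) * (β - α) ^ 2 * ((pa + pb) * γ) := by ring
        rw [dSc, if_pos ⟨hαp, hβp⟩]
        rcases min_cases |β - α| ((β - α) ^ 2 / min α β) with ⟨hmn, _⟩ | ⟨hmn, _⟩ <;>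
          rw [hmn] <;> linarith
      · have hβ0 : β = 0 := le_antisymm hβn hβ
        rw [dSc, if_neg (by simp [hβ0])]
        linarith
    · have hα0 : α = 0 := le_antisymm hαn hα
      rw [dSc, if_neg (by simp [hα0])]
      linarith

/-- `ΔI ≤ (π_a + π_b) |X| d(α, β)` for the merger of `ya` and `yb`. -/
theorem deltaI_le_d {X Y : Type} [Fintype X] [Nonempty X] [Fintype Y] [DecidableEq Y]
    (pX : X → ℝ) (W : X → Y → ℝ)
    (hW0 : ∀ x y, 0 ≤ W x y) (hW1 : ∀ x, ∑ y, W x y = 1)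
    (hpX : ∀ x, 0 < pX x) (hpXsum : ∑ x, pX x = 1)
    (hpY : ∀ y, 0 < outDist pX W y)
    (ya yb : Y) (hab : ya ≠ yb) :
    mutInfo pX W - mutInfo pX (merger W ya yb) ≤
      (outDist pX W ya + outDist pX W yb) * (Fintype.card X : ℝ) *
        dVec (fun x => post pX W x ya) (fun x => post pX W x yb) := by
  classical
  set Q := merger W ya yb with hQ
  set pa := outDist pX W ya with hpa
  set pb := outDist pX W yb with hpb
  have hpa0 : 0 < pa := hpY ya
  have hpb0 : 0 < pb := hpY yb
  -- decomposition of sums over Y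
  have hsum : ∀ f : Y → ℝ,
      ∑ y, f y = f ya + f yb + ∑ z : {y : Y // y ≠ ya ∧ y ≠ yb}, f z.1 := by
    intro f
    have h1 : ∑ z : {y : Y // y ≠ ya ∧ y ≠ yb}, f z.1
        = ∑ y ∈ Finset.univ.filter (fun y => y ≠ ya ∧ y ≠ yb), f y :=
      (Finset.sum_subtype _ (by simp) f).symm
    have h2 : Finset.univ.filter (fun y => ¬(y ≠ ya ∧ y ≠ yb)) = ({ya, yb} : Finset Y) := by
      ext y; simp [not_and_or, not_not, or_comm]; tauto
    have h3 := Finset.sum_filter_add_sum_filter_not Finset.univ (fun y => y ≠ ya ∧ y ≠ yb) f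
    rw [h1, ← h3, h2, Finset.sum_pair hab]; ring
  -- merger facts
  have hQout_none : outDist pX Q none = pa + pb := by
    simp [outDist, merger, hQ, hpa, hpb, mul_add, Finset.sum_add_distrib]
  have hQout_some : ∀ z : {y : Y // y ≠ ya ∧ y ≠ yb},
      outDist pX Q (some z) = outDist pX W z.1 := by
    intro z; simp [outDist, merger, hQ]
  have hQpost_some : ∀ (x : X) (z : {y : Y // y ≠ ya ∧ y ≠ yb}),
      post pX Q x (some z) = post pX W x z.1 := by
    intro x z; simp [post, merger, hQ, outDist]
  have hγ : ∀ x : X, post pX Q x none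
      = (pa * post pX W x ya + pb * post pX W x yb) / (pa + pb) := by
    intro x
    have : post pX Q x none = pX x * (W x ya + W x yb) / (pa + pb) := by
      rw [post, hQout_none]; simp [merger, hQ]
    rw [this, post, post, ← hpa, ← hpb]
    field_simp
  -- difference of mutual informations
  have hΔ : mutInfo pX W - mutInfo pX Q
      = ∑ x, ((pa + pb) * eta (post pX Q x none)
          - pa * eta (post pX W x ya) - pb * eta (post pX W x yb)) := by
    have h1 : ∀ x : X, ∑ o : Option {y : Y // y ≠ ya ∧ y ≠ yb},
        outDist pX Q o * eta (post pX Q x o)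
        = (pa + pb) * eta (post pX Q x none)
          + ∑ z : {y : Y // y ≠ ya ∧ y ≠ yb}, outDist pX W z.1 * eta (post pX W x z.1) := by
      intro x
      rw [Fintype.sum_option, hQout_none]
      simp only [hQout_some, hQpost_some]
    have h2 : ∀ x : X, ∑ y, outDist pX W y * eta (post pX W x y)
        = pa * eta (post pX W x ya) + pb * eta (post pX W x yb)
          + ∑ z : {y : Y // y ≠ ya ∧ y ≠ yb}, outDist pX W z.1 * eta (post pX W x z.1) :=
      fun x => hsum _
    have e1 : ∑ x, ∑ o : Option {y : Y // y ≠ ya ∧ y ≠ yb},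
        outDist pX Q o * eta (post pX Q x o)
        = ∑ x, ((pa + pb) * eta (post pX Q x none)
          + ∑ z : {y : Y // y ≠ ya ∧ y ≠ yb}, outDist pX W z.1 * eta (post pX W x z.1)) :=
      Finset.sum_congr rfl fun x _ => h1 x
    have e2 : ∑ x, ∑ y, outDist pX W y * eta (post pX W x y)
        = ∑ x, (pa * eta (post pX W x ya) + pb * eta (post pX W x yb)
          + ∑ z : {y : Y // y ≠ ya ∧ y ≠ yb}, outDist pX W z.1 * eta (post pX W x z.1)) :=
      Finset.sum_congr rfl fun x _ => h2 x
    have e3 : ∑ x, ((pa + pb) * eta (post pX Q x none)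
          - pa * eta (post pX W x ya) - pb * eta (post pX W x yb))
        = (∑ x, ∑ o : Option {y : Y // y ≠ ya ∧ y ≠ yb},
            outDist pX Q o * eta (post pX Q x o))
          - ∑ x, ∑ y, outDist pX W y * eta (post pX W x y) := by
      rw [e1, e2, ← Finset.sum_sub_distrib]
      exact Finset.sum_congr rfl fun x _ => by ring
    rw [mutInfo, mutInfo, e3]
    ring
  rw [hΔ]
  -- pointwise bound
  have hpost0 : ∀ (x : X) (y : Y), 0 ≤ post pX W x y := fun x y =>
    div_nonneg (mul_nonneg (hpX x).le (hW0 x y)) (hpY y).le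
  have hpt : ∀ x : X, (pa + pb) * eta (post pX Q x none)
      - pa * eta (post pX W x ya) - pb * eta (post pX W x yb)
      ≤ (pa + pb) * dSc (post pX W x ya) (post pX W x yb) := by
    intro x
    rw [hγ x]
    exact key pa pb _ _ hpa0 hpb0 (hpost0 x ya) (hpost0 x yb)
  have hdV : ∀ x : X, dSc (post pX W x ya) (post pX W x yb)
      ≤ dVec (fun x => post pX W x ya) (fun x => post pX W x yb) :=
    fun x => by
      rw [dVec]
      exact Finset.le_sup' (fun x : X => dSc (post pX W x ya) (post pX W x yb))
        (Finset.mem_univ x)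
  calc ∑ x, ((pa + pb) * eta (post pX Q x none)
        - pa * eta (post pX W x ya) - pb * eta (post pX W x yb))
      ≤ ∑ x : X, (pa + pb) * dVec (fun x => post pX W x ya) (fun x => post pX W x yb) := by
        apply Finset.sum_le_sum
        intro x _
        exact le_trans (hpt x) (mul_le_mul_of_nonneg_left (hdV x) (by linarith))
    _ = (pa + pb) * (Fintype.card X : ℝ)
          * dVec (fun x => post pX W x ya) (fun x => post pX W x yb) := by
        rw [Finset.sum_const, Finset.card_univ, nsmul_eq_mul]; ring
end

section
/- Let X be a finite set with |X| ≥ 2, fix x_max ∈ X with X' := X ∖ {x_max}, and let 0 < r ≤ 1. Then the weight of V' := ∪ { Q'(α,r) : α ∈ ℝ^X_{K+}, x_max(α) = x_max } satisfies ∫_{V'} φ(ζ') dζ' ≤ (π/2)^{(|X|−1)/2} / Γ(1 + (|X|−1)/2), where Γ is the Gamma function. -/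
open scoped BigOperators ENNReal
open MeasureTheory

/-- `ω↓(α,r) = max (√(r²/4 + αr) - r/2, r)`. -/
noncomputable def omegaDown (a r : ℝ) : ℝ :=
  max (Real.sqrt (r ^ 2 / 4 + a * r) - r / 2) r

/-- `ω'(α,r) = ω↓(α,r)/(|X| - 1)`, where `k = |X|`. -/
noncomputable def omegaPrime (k : ℕ) (a r : ℝ) : ℝ :=
  omegaDown a r / ((k : ℝ) - 1)

lemma omegaDown_le_one {a r : ℝ} (ha0 : 0 ≤ a) (ha1 : a ≤ 1) (hr0 : 0 < r) (hr1 : r ≤ 1) :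
    omegaDown a r ≤ 1 := by
  unfold omegaDown
  apply max_le _ hr1
  have h : Real.sqrt (r ^ 2 / 4 + a * r) ≤ r / 2 + 1 := by
    rw [show r / 2 + 1 = Real.sqrt ((r / 2 + 1) ^ 2) from (Real.sqrt_sq (by linarith)).symm]
    apply Real.sqrt_le_sqrt
    nlinarith
  linarith

section Aux

variable {ι : Type} [Fintype ι] [DecidableEq ι]

/-- The positive orthant piece of the ball has `2 ^ n` times smaller volume. -/
lemma volume_orthant_ball [Nonempty ι] :
    (2 : ℝ≥0∞) ^ (Fintype.card ι) *
      volume {u : ι → ℝ | (∀ i, 0 < u i) ∧ ∑ i, (u i) ^ 2 ≤ 2}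
      = volume {u : ι → ℝ | ∑ i, (u i) ^ 2 ≤ 2} := by
  classical
  set s : Set (ι → ℝ) := {u | (∀ i, 0 < u i) ∧ ∑ i, (u i) ^ 2 ≤ 2} with hs
  set d : (ι → Bool) → ι → ℝ := fun σ i => if σ i then 1 else -1 with hd
  set L : (ι → Bool) → ((ι → ℝ) →ₗ[ℝ] (ι → ℝ)) :=
    fun σ => Matrix.toLin' (Matrix.diagonal (d σ)) with hL
  have hdapp : ∀ σ (u : ι → ℝ) i, (L σ) u i = d σ i * u i := by
    intro σ u i
    simp [hL, Matrix.toLin'_apply, Matrix.mulVec_diagonal]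
  have hdsq : ∀ σ i, d σ i ^ 2 = 1 := by
    intro σ i; by_cases h : σ i <;> simp [hd, h]
  have hdet : ∀ σ, LinearMap.det (L σ) = ∏ i, d σ i := by
    intro σ; rw [hL, LinearMap.det_toLin', Matrix.det_diagonal]
  have hdetabs : ∀ σ, |LinearMap.det (L σ)| = 1 := by
    intro σ
    rw [hdet, Finset.abs_prod]
    rw [Finset.prod_eq_one]
    intro i _
    by_cases h : σ i <;> simp [hd, h]
  have hdetne : ∀ σ, LinearMap.det (L σ) ≠ 0 := by
    intro σ h
    have := hdetabs σ
    rw [h] at this; simp at this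
  -- the signed orthant pieces
  set A : (ι → Bool) → Set (ι → ℝ) := fun σ => (L σ) ⁻¹' s with hA
  have hAeq : ∀ σ, A σ = {u : ι → ℝ | (∀ i, 0 < d σ i * u i) ∧ ∑ i, (u i) ^ 2 ≤ 2} := by
    intro σ
    ext u
    simp only [hA, Set.mem_preimage, hs, Set.mem_setOf_eq]
    constructor
    · rintro ⟨h1, h2⟩
      refine ⟨fun i => by simpa [hdapp] using h1 i, ?_⟩
      calc ∑ i, (u i) ^ 2 = ∑ i, ((L σ) u i) ^ 2 := by
            apply Finset.sum_congr rfl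
            intro i _
            rw [hdapp, mul_pow, hdsq, one_mul]
        _ ≤ 2 := h2
    · rintro ⟨h1, h2⟩
      refine ⟨fun i => by simpa [hdapp] using h1 i, ?_⟩
      calc ∑ i, ((L σ) u i) ^ 2 = ∑ i, (u i) ^ 2 := by
            apply Finset.sum_congr rfl
            intro i _
            rw [hdapp, mul_pow, hdsq, one_mul]
        _ ≤ 2 := h2
  have hAvol : ∀ σ, volume (A σ) = volume s := by
    intro σ
    rw [hA, Measure.addHaar_preimage_linearMap volume (hdetne σ)]
    rw [abs_inv, hdetabs σ]
    simp
  -- measurability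
  have hAmeas : ∀ σ, MeasurableSet (A σ) := by
    intro σ
    rw [hAeq]
    rw [Set.setOf_and]
    apply MeasurableSet.inter
    · rw [Set.setOf_forall]
      exact MeasurableSet.iInter fun i =>
        measurableSet_lt measurable_const (measurable_const.mul (measurable_pi_apply i))
    · exact measurableSet_le
        (Finset.measurable_sum _ fun i _ => (measurable_pi_apply i).pow_const 2) measurable_const
  -- disjointness
  have hdisj : Pairwise (Function.onFun Disjoint A) := by
    intro σ τ hστ
    rw [Function.onFun, Set.disjoint_left]
    intro u huσ huτ
    rw [hAeq] at huσ huτ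
    obtain ⟨i, hi⟩ : ∃ i, σ i ≠ τ i := by
      by_contra h
      push_neg at h
      exact hστ (funext h)
    have h1 := huσ.1 i
    have h2 := huτ.1 i
    by_cases h : σ i
    · have h' : τ i = false := by
        cases hτ : τ i
        · rfl
        · exact absurd (by rw [h, hτ]) hi
      simp only [hd, h, h'] at h1 h2
      norm_num at h1 h2
      linarith
    · have h' : τ i = true := by
        cases hτ : τ i
        · exact absurd (by simp [h, hτ] : σ i = τ i) hi
        · rfl
      simp only [hd, h, h'] at h1 h2
      norm_num at h1 h2
      linarith
  -- union
  have hunion : (⋃ σ, A σ) = {u : ι → ℝ | ∑ i, (u i) ^ 2 ≤ 2} ∩ {u | ∀ i, u i ≠ 0} := by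
    ext u
    simp only [Set.mem_iUnion, Set.mem_inter_iff, Set.mem_setOf_eq]
    constructor
    · rintro ⟨σ, huσ⟩
      rw [hAeq] at huσ
      refine ⟨huσ.2, fun i => ?_⟩
      intro h0
      have := huσ.1 i
      rw [h0, mul_zero] at this
      exact lt_irrefl _ this
    · rintro ⟨hsum, hne⟩
      refine ⟨fun i => decide (0 < u i), ?_⟩
      rw [hAeq]
      refine ⟨fun i => ?_, hsum⟩
      by_cases h : 0 < u i
      · simp [hd, h]
      · have hlt : u i < 0 := lt_of_le_of_ne (not_lt.mp h) (hne i)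
        simp only [hd, h]
        norm_num
        linarith
  have hnull : volume ({u : ι → ℝ | ∑ i, (u i) ^ 2 ≤ 2} \ {u | ∀ i, u i ≠ 0}) = 0 := by
    apply measure_mono_null
      (t := ⋃ i : ι, {u : ι → ℝ | u i = 0})
    · rintro u ⟨_, hu⟩
      simp only [Set.mem_setOf_eq, not_forall, not_not] at hu
      obtain ⟨i, hi⟩ := hu
      exact Set.mem_iUnion.mpr ⟨i, hi⟩
    · apply measure_iUnion_null
      intro i
      rw [MeasureTheory.volume_pi]
      exact Measure.pi_hyperplane _ i 0
  have hNmeas : MeasurableSet {u : ι → ℝ | ∀ i, u i ≠ 0} := by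
    rw [Set.setOf_forall]
    exact MeasurableSet.iInter fun i =>
      (measurableSet_eq_fun (measurable_pi_apply i) measurable_const).compl
  have hBeq : volume {u : ι → ℝ | ∑ i, (u i) ^ 2 ≤ 2} = volume (⋃ σ, A σ) := by
    rw [hunion]
    rw [← measure_inter_add_diff {u : ι → ℝ | ∑ i, (u i) ^ 2 ≤ 2} hNmeas, hnull, add_zero]
  rw [hBeq, measure_iUnion hdisj hAmeas, tsum_fintype]
  simp only [hAvol]
  rw [Finset.sum_const, Finset.card_univ, Fintype.card_fun, Fintype.card_bool, nsmul_eq_mul]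
  push_cast
  ring

/-- Change of variables `ζ i = u i ^ 2` on the simplex-like region. -/
lemma lintegral_simplex_eq_volume_orthant [Nonempty ι] :
    ∫⁻ ζ : ι → ℝ in {ζ | (∀ i, 0 ≤ ζ i) ∧ ∑ i, ζ i ≤ 2},
        ENNReal.ofReal (∏ i, 1 / Real.sqrt (4 * ζ i))
      = volume {u : ι → ℝ | (∀ i, 0 < u i) ∧ ∑ i, (u i) ^ 2 ≤ 2} := by
  classical
  set g : (ι → ℝ) → ℝ≥0∞ := fun ζ => ENNReal.ofReal (∏ i, 1 / Real.sqrt (4 * ζ i)) with hg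
  set S : Set (ι → ℝ) := {ζ | (∀ i, 0 ≤ ζ i) ∧ ∑ i, ζ i ≤ 2} with hS
  set T : Set (ι → ℝ) := {ζ | (∀ i, 0 < ζ i) ∧ ∑ i, ζ i ≤ 2} with hT
  set s : Set (ι → ℝ) := {u | (∀ i, 0 < u i) ∧ ∑ i, (u i) ^ 2 ≤ 2} with hs
  have hsmeas : MeasurableSet s := by
    rw [hs, Set.setOf_and]
    apply MeasurableSet.inter
    · rw [Set.setOf_forall]
      exact MeasurableSet.iInter fun i =>
        measurableSet_lt measurable_const (measurable_pi_apply i)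
    · exact measurableSet_le
        (Finset.measurable_sum _ fun i _ => (measurable_pi_apply i).pow_const 2) measurable_const
  -- Step 1: `S` and `T` agree a.e.
  have hST : S =ᵐ[volume] T := by
    rw [ae_eq_set]
    constructor
    · apply measure_mono_null (t := ⋃ i : ι, {ζ : ι → ℝ | ζ i = 0})
      · rintro ζ ⟨⟨h1, h2⟩, hne⟩
        have hnall : ¬∀ i, 0 < ζ i := fun hall => hne ⟨hall, h2⟩
        push_neg at hnall
        obtain ⟨i, hi⟩ := hnall
        exact Set.mem_iUnion.mpr ⟨i, le_antisymm hi (h1 i)⟩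
      · apply measure_iUnion_null
        intro i
        rw [MeasureTheory.volume_pi]
        exact Measure.pi_hyperplane _ i 0
    · have : T \ S = ∅ := by
        rw [Set.diff_eq_empty]
        rintro ζ ⟨h1, h2⟩
        exact ⟨fun i => (h1 i).le, h2⟩
      rw [this]; simp
  rw [setLIntegral_congr hST]
  -- Step 2: `T` is the image of `s` under coordinatewise squaring.
  set f : (ι → ℝ) → (ι → ℝ) := fun u i => (u i) ^ 2 with hf
  have himg : f '' s = T := by
    ext ζ
    constructor
    · rintro ⟨u, ⟨hu1, hu2⟩, rfl⟩
      exact ⟨fun i => pow_pos (hu1 i) 2, hu2⟩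
    · rintro ⟨h1, h2⟩
      refine ⟨fun i => Real.sqrt (ζ i), ⟨fun i => Real.sqrt_pos.mpr (h1 i), ?_⟩, ?_⟩
      · calc ∑ i, (Real.sqrt (ζ i)) ^ 2 = ∑ i, ζ i := by
              apply Finset.sum_congr rfl
              intro i _
              exact Real.sq_sqrt (h1 i).le
          _ ≤ 2 := h2
      · funext i
        exact Real.sq_sqrt (h1 i).le
  -- derivative data
  set f' : (ι → ℝ) → ((ι → ℝ) →L[ℝ] (ι → ℝ)) :=
    fun u => ContinuousLinearMap.pi (fun i => (2 * u i) • ContinuousLinearMap.proj i) with hf'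
  have hderiv : ∀ u ∈ s, HasFDerivWithinAt f (f' u) s u := by
    intro u _
    apply HasFDerivAt.hasFDerivWithinAt
    apply hasFDerivAt_pi.mpr
    intro i
    have h := (hasFDerivAt_apply (𝕜 := ℝ) i u).mul (hasFDerivAt_apply (𝕜 := ℝ) i u)
    have heq : (2 * u i) • ContinuousLinearMap.proj (R := ℝ) (φ := fun _ : ι => ℝ) i
        = u i • ContinuousLinearMap.proj i + u i • ContinuousLinearMap.proj i := by
      rw [two_mul, add_smul]
    rw [heq]
    refine h.congr_of_eventuallyEq (Filter.Eventually.of_forall fun v => ?_)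
    show (v i) ^ 2 = v i * v i
    ring
  have hinj : Set.InjOn f s := by
    intro u hu v hv huv
    funext i
    have h := congrFun huv i
    simp only [hf] at h
    have h1 := (hu.1 i).le
    have h2 := (hv.1 i).le
    calc u i = Real.sqrt ((u i) ^ 2) := (Real.sqrt_sq h1).symm
      _ = Real.sqrt ((v i) ^ 2) := by rw [h]
      _ = v i := Real.sqrt_sq h2
  have hcv := MeasureTheory.lintegral_image_eq_lintegral_abs_det_fderiv_mul volume
    hsmeas hderiv hinj g
  rw [himg] at hcv
  rw [hcv]
  -- Step 3: the integrand is `1` on `s`.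
  have hone : ∫⁻ u in s, ENNReal.ofReal |(f' u).det| * g (f u) = ∫⁻ u in s, 1 := by
    apply setLIntegral_congr_fun hsmeas
    intro u hu
    have hdet : (f' u).det = ∏ i, (2 * u i) := by
      have : (f' u : (ι → ℝ) →ₗ[ℝ] (ι → ℝ))
          = Matrix.toLin' (Matrix.diagonal (fun i => 2 * u i)) := by
        apply LinearMap.ext
        intro v
        funext i
        simp [hf', Matrix.toLin'_apply, Matrix.mulVec_diagonal]
      show LinearMap.det (f' u : (ι → ℝ) →ₗ[ℝ] (ι → ℝ)) = _
      rw [this, LinearMap.det_toLin', Matrix.det_diagonal]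
    have hpos : ∀ i, 0 < 2 * u i := fun i => by have := hu.1 i; linarith
    beta_reduce
    rw [hdet, abs_of_pos (Finset.prod_pos fun i _ => hpos i)]
    have hgf : g (f u) = ENNReal.ofReal (∏ i, 1 / (2 * u i)) := by
      simp only [hg, hf]
      congr 1
      apply Finset.prod_congr rfl
      intro i _
      congr 1
      rw [show (4 : ℝ) * (u i) ^ 2 = (2 * u i) ^ 2 by ring, Real.sqrt_sq (hpos i).le]
    rw [hgf, ← ENNReal.ofReal_mul (Finset.prod_nonneg fun i _ => (hpos i).le),
      ← Finset.prod_mul_distrib]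
    have : ∀ i ∈ Finset.univ, (2 * u i) * (1 / (2 * u i)) = 1 := by
      intro i _
      rw [mul_one_div, div_self (hpos i).ne']
    rw [Finset.prod_congr rfl this, Finset.prod_const_one]
    simp
  rw [hone, setLIntegral_one]

lemma lintegral_simplex_eq [Nonempty ι] :
    ∫⁻ ζ : ι → ℝ in {ζ | (∀ i, 0 ≤ ζ i) ∧ ∑ i, ζ i ≤ 2},
        ENNReal.ofReal (∏ i, 1 / Real.sqrt (4 * ζ i))
      = ENNReal.ofReal ((Real.pi / 2) ^ ((Fintype.card ι : ℝ) / 2)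
          / Real.Gamma ((Fintype.card ι : ℝ) / 2 + 1)) := by
  classical
  set n := Fintype.card ι with hn
  have hΓpos : 0 < Real.Gamma ((n : ℝ) / 2 + 1) := Real.Gamma_pos_of_pos (by positivity)
  rw [lintegral_simplex_eq_volume_orthant]
  -- the volume of the full ball of radius √2
  have hset : {u : ι → ℝ | ∑ i, (u i) ^ 2 ≤ 2}
      = {x : ι → ℝ | (∑ i, |x i| ^ (2 : ℝ)) ^ (1 / (2 : ℝ)) ≤ Real.sqrt 2} := by
    ext x
    simp only [Set.mem_setOf_eq]
    have h1 : ∀ i ∈ Finset.univ, |x i| ^ (2:ℝ) = (x i) ^ 2 := fun i _ => by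
      rw [Real.rpow_two, sq_abs]
    rw [Finset.sum_congr rfl h1, ← Real.sqrt_eq_rpow]
    exact (Real.sqrt_le_sqrt_iff (by norm_num)).symm
  have hg32 : 2 * Real.Gamma (1 / 2 + 1) = Real.sqrt Real.pi := by
    rw [Real.Gamma_add_one (by norm_num), Real.Gamma_one_half_eq]; ring
  have hhalf : (Real.pi / 2) ^ ((n : ℝ) / 2) = (Real.sqrt (Real.pi / 2)) ^ n := by
    rw [show ((n : ℝ) / 2) = (1 / 2) * (n : ℝ) by ring, Real.rpow_mul (by positivity),
      Real.rpow_natCast, ← Real.sqrt_eq_rpow]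
  have h4 : Real.sqrt 4 = 2 := by
    rw [show (4 : ℝ) = 2 ^ 2 by norm_num, Real.sqrt_sq (by norm_num)]
  have hs2 : Real.sqrt 2 * Real.sqrt Real.pi = 2 * Real.sqrt (Real.pi / 2) := by
    calc Real.sqrt 2 * Real.sqrt Real.pi
        = Real.sqrt (2 * Real.pi) := (Real.sqrt_mul (by norm_num) _).symm
      _ = Real.sqrt (4 * (Real.pi / 2)) := by ring_nf
      _ = Real.sqrt 4 * Real.sqrt (Real.pi / 2) := Real.sqrt_mul (by norm_num) _
      _ = 2 * Real.sqrt (Real.pi / 2) := by rw [h4]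
  have hreal : (Real.sqrt 2) ^ n * (Real.sqrt Real.pi ^ n / Real.Gamma ((n : ℝ) / 2 + 1))
      = 2 ^ n * ((Real.pi / 2) ^ ((n : ℝ) / 2) / Real.Gamma ((n : ℝ) / 2 + 1)) := by
    rw [hhalf, ← mul_div_assoc, ← mul_pow, hs2, mul_pow, mul_div_assoc]
  have hball : volume {u : ι → ℝ | ∑ i, (u i) ^ 2 ≤ 2}
      = ENNReal.ofReal (2 ^ n *
          ((Real.pi / 2) ^ ((n : ℝ) / 2) / Real.Gamma ((n : ℝ) / 2 + 1))) := by
    rw [hset, MeasureTheory.volume_sum_rpow_le ι one_le_two (Real.sqrt 2)]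
    rw [← ENNReal.ofReal_pow (Real.sqrt_nonneg 2), ← ENNReal.ofReal_mul (by positivity)]
    congr 1
    rw [hg32, ← hn, hreal]
  have h1 := volume_orthant_ball (ι := ι)
  rw [hball] at h1
  have h2 : ENNReal.ofReal (2 ^ n *
        ((Real.pi / 2) ^ ((n : ℝ) / 2) / Real.Gamma ((n : ℝ) / 2 + 1)))
      = (2 : ℝ≥0∞) ^ n *
        ENNReal.ofReal ((Real.pi / 2) ^ ((n : ℝ) / 2) / Real.Gamma ((n : ℝ) / 2 + 1)) := by
    rw [ENNReal.ofReal_mul (by positivity), ENNReal.ofReal_pow (by norm_num)]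
    norm_num
  rw [h2] at h1
  exact (ENNReal.mul_right_inj (pow_ne_zero _ (by norm_num)) (ENNReal.pow_ne_top (by norm_num))).mp h1

end Aux

/-- For `0 < r ≤ 1`, the weight of the union `V'` of all quadrants `Q'(α,r)` over probability
vectors `α` maximized at `xmax` satisfies
`∫_{V'} φ dζ' ≤ (π/2)^{(|X|-1)/2} / Γ(1 + (|X|-1)/2)`. -/
theorem V_weight_upper_bound {X : Type} [Fintype X] [DecidableEq X]
    (hX : 2 ≤ Fintype.card X)
    (xmax : X) (r : ℝ) (hr0 : 0 < r) (hr1 : r ≤ 1) :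
    (∫ ζ : {x : X // x ≠ xmax} → ℝ in
        {ζ | ∃ α : X → ℝ,
          (∀ x, 0 ≤ α x) ∧ (∑ x, α x = 1) ∧ (∀ x, α x ≤ α xmax) ∧
          ∀ x : {x : X // x ≠ xmax},
            0 ≤ ζ x - α x.1 ∧ ζ x - α x.1 ≤ omegaPrime (Fintype.card X) (α x.1) r},
        ∏ x, 1 / Real.sqrt (4 * ζ x)) ≤
      (Real.pi / 2) ^ (((Fintype.card X : ℝ) - 1) / 2) /
        Real.Gamma (1 + ((Fintype.card X : ℝ) - 1) / 2) := by
  classical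
  have hcard : Fintype.card {x : X // x ≠ xmax} = Fintype.card X - 1 := by
    simp [Fintype.card_subtype_compl (fun x : X => x = xmax)]
  have hne : Nonempty {x : X // x ≠ xmax} := by
    rw [← Fintype.card_pos_iff, hcard]; omega
  have hcastn : ((Fintype.card {x : X // x ≠ xmax} : ℝ)) = (Fintype.card X : ℝ) - 1 := by
    rw [hcard, Nat.cast_sub (by omega)]; norm_num
  set f : ({x : X // x ≠ xmax} → ℝ) → ℝ := fun ζ => ∏ i, 1 / Real.sqrt (4 * ζ i) with hf
  have hmf : Measurable f := by
    apply Finset.measurable_prod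
    intro i _
    simp only [one_div]
    exact ((Real.continuous_sqrt.measurable).comp
      (measurable_const.mul (measurable_pi_apply i))).inv
  have hf0 : ∀ ζ, 0 ≤ f ζ := fun ζ =>
    Finset.prod_nonneg fun i _ => by positivity
  -- the union of quadrants is contained in the simplex-like region
  have hsub : {ζ : {x : X // x ≠ xmax} → ℝ | ∃ α : X → ℝ,
        (∀ x, 0 ≤ α x) ∧ (∑ x, α x = 1) ∧ (∀ x, α x ≤ α xmax) ∧
        ∀ x : {x : X // x ≠ xmax},
          0 ≤ ζ x - α x.1 ∧ ζ x - α x.1 ≤ omegaPrime (Fintype.card X) (α x.1) r}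
      ⊆ {ζ : {x : X // x ≠ xmax} → ℝ | (∀ i, 0 ≤ ζ i) ∧ ∑ i, ζ i ≤ 2} := by
    rintro ζ ⟨α, hα0, hαsum, hαmax, hq⟩
    have hα1 : ∀ x, α x ≤ 1 := by
      intro x
      calc α x ≤ ∑ y, α y := Finset.single_le_sum (fun y _ => hα0 y) (Finset.mem_univ x)
        _ = 1 := hαsum
    have hnpos : (0 : ℝ) < (Fintype.card {x : X // x ≠ xmax} : ℝ) := by
      have := Fintype.card_pos_iff.mpr hne
      exact_mod_cast this
    constructor
    · intro i
      have h1 := (hq i).1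
      have h2 := hα0 i.1
      linarith
    · have hstep : ∀ i : {x : X // x ≠ xmax},
          ζ i ≤ α i.1 + 1 / (Fintype.card {x : X // x ≠ xmax} : ℝ) := by
        intro i
        have h2 := (hq i).2
        have hω : omegaPrime (Fintype.card X) (α i.1) r
            ≤ 1 / (Fintype.card {x : X // x ≠ xmax} : ℝ) := by
          unfold omegaPrime
          rw [← hcastn]
          gcongr
          exact omegaDown_le_one (hα0 i.1) (hα1 i.1) hr0 hr1
        linarith
      calc ∑ i, ζ i
          ≤ ∑ i : {x : X // x ≠ xmax},
              (α i.1 + 1 / (Fintype.card {x : X // x ≠ xmax} : ℝ)) :=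
            Finset.sum_le_sum fun i _ => hstep i
        _ = (∑ i : {x : X // x ≠ xmax}, α i.1) + 1 := by
            rw [Finset.sum_add_distrib, Finset.sum_const, Finset.card_univ, nsmul_eq_mul]
            congr 1
            rw [mul_one_div, div_self hnpos.ne']
        _ ≤ 1 + 1 := by
            have hsum : ∑ i : {x : X // x ≠ xmax}, α i.1
                = ∑ x ∈ Finset.univ.erase xmax, α x :=
              (Finset.sum_subtype _ (fun x => by simp) α).symm
            have hle : ∑ x ∈ Finset.univ.erase xmax, α x ≤ ∑ x, α x :=
              Finset.sum_le_sum_of_subset_of_nonneg (Finset.erase_subset _ _)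
                (fun x _ _ => hα0 x)
            rw [hαsum] at hle
            rw [hsum]
            linarith
        _ = 2 := by norm_num
  -- pass to the Lebesgue integral
  have h1 : (∫ ζ : {x : X // x ≠ xmax} → ℝ in
      {ζ | ∃ α : X → ℝ,
        (∀ x, 0 ≤ α x) ∧ (∑ x, α x = 1) ∧ (∀ x, α x ≤ α xmax) ∧
        ∀ x : {x : X // x ≠ xmax},
          0 ≤ ζ x - α x.1 ∧ ζ x - α x.1 ≤ omegaPrime (Fintype.card X) (α x.1) r},
      f ζ)
      = (∫⁻ ζ : {x : X // x ≠ xmax} → ℝ in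
        {ζ | ∃ α : X → ℝ,
          (∀ x, 0 ≤ α x) ∧ (∑ x, α x = 1) ∧ (∀ x, α x ≤ α xmax) ∧
          ∀ x : {x : X // x ≠ xmax},
            0 ≤ ζ x - α x.1 ∧ ζ x - α x.1 ≤ omegaPrime (Fintype.card X) (α x.1) r},
        ENNReal.ofReal (f ζ)).toReal :=
    integral_eq_lintegral_of_nonneg_ae (Filter.Eventually.of_forall hf0)
      hmf.aestronglyMeasurable
  have h2 := lintegral_mono_set (μ := volume)
    (f := fun ζ : {x : X // x ≠ xmax} → ℝ => ENNReal.ofReal (f ζ)) hsub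
  have h3 := lintegral_simplex_eq (ι := {x : X // x ≠ xmax})
  have hCeq : (Real.pi / 2) ^ ((Fintype.card {x : X // x ≠ xmax} : ℝ) / 2)
        / Real.Gamma ((Fintype.card {x : X // x ≠ xmax} : ℝ) / 2 + 1)
      = (Real.pi / 2) ^ (((Fintype.card X : ℝ) - 1) / 2) /
        Real.Gamma (1 + ((Fintype.card X : ℝ) - 1) / 2) := by
    rw [hcastn, add_comm]
  have hC0 : 0 ≤ (Real.pi / 2) ^ (((Fintype.card X : ℝ) - 1) / 2) /
      Real.Gamma (1 + ((Fintype.card X : ℝ) - 1) / 2) := by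
    apply div_nonneg
    · exact Real.rpow_nonneg (by positivity) _
    · apply le_of_lt
      apply Real.Gamma_pos_of_pos
      have : (2 : ℝ) ≤ (Fintype.card X : ℝ) := by exact_mod_cast hX
      nlinarith
  rw [h1]
  calc (∫⁻ ζ : {x : X // x ≠ xmax} → ℝ in
      {ζ | ∃ α : X → ℝ,
        (∀ x, 0 ≤ α x) ∧ (∑ x, α x = 1) ∧ (∀ x, α x ≤ α xmax) ∧
        ∀ x : {x : X // x ≠ xmax},
          0 ≤ ζ x - α x.1 ∧ ζ x - α x.1 ≤ omegaPrime (Fintype.card X) (α x.1) r},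
      ENNReal.ofReal (f ζ)).toReal
      ≤ (ENNReal.ofReal ((Real.pi / 2) ^ (((Fintype.card X : ℝ) - 1) / 2) /
          Real.Gamma (1 + ((Fintype.card X : ℝ) - 1) / 2))).toReal := by
        apply ENNReal.toReal_mono ENNReal.ofReal_ne_top
        refine le_trans h2 ?_
        simp only [hf]
        rw [h3, hCeq]
    _ = _ := ENNReal.toReal_ofReal hC0
end
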